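/- arXiv:2507.22449 — 3 statements merged into one kernel-verified Lean document; each statement's English description precedes it below -/
import Mathlib

section
/- Discrete Gronwall lemma in difference form: Let M ∈ ℕ, τ > 0, and λ ∈ ℝ with λ ≠ 0 and 1 − λτ > 0. Let a : {0, 1, …, M} → ℝ and g : {1, …, M} → ℝ, and let G ≥ 0 satisfy |g(m)| ≤ G for all m ∈ {1, …, M}. If (a(m) − a(m−1))/τ ≤ λ·a(m) + g(m) for all m ∈ {1, …, M}, then for every m ∈ {1, …, M} one has a(m) ≤ (1 − λτ)^{−m}·a(0) + ((1 − λτ)^{−m} − 1)·G/λ. -/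
/-- **Discrete Gronwall lemma in difference form.** If `(a m - a (m-1))/τ ≤ λ·a m + g m`
for `m = 1, …, M`, with `1 - λτ > 0`, `λ ≠ 0`, and `|g m| ≤ G`, then
`a m ≤ (1 - λτ)⁻ᵐ·a 0 + ((1 - λτ)⁻ᵐ - 1)·G/λ` for every `m = 1, …, M`. -/
theorem discrete_gronwall_difference_form (M : ℕ) (τ lam : ℝ) (hτ : 0 < τ)
    (hlam : lam ≠ 0) (hone : 0 < 1 - lam * τ)
    (a : ℕ → ℝ) (g : ℕ → ℝ) (G : ℝ) (hG : 0 ≤ G)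
    (hg : ∀ m : ℕ, 1 ≤ m → m ≤ M → |g m| ≤ G)
    (hdiff : ∀ m : ℕ, 1 ≤ m → m ≤ M → (a m - a (m - 1)) / τ ≤ lam * a m + g m) :
    ∀ m : ℕ, 1 ≤ m → m ≤ M →
      a m ≤ ((1 - lam * τ) ^ m)⁻¹ * a 0 + (((1 - lam * τ) ^ m)⁻¹ - 1) * G / lam := by
  set r := 1 - lam * τ with hr
  have hr0 : r ≠ 0 := ne_of_gt hone
  clear_value r
  have key : ∀ m : ℕ, m ≤ M → a m ≤ (r ^ m)⁻¹ * a 0 + ((r ^ m)⁻¹ - 1) * G / lam := by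
    intro m
    induction m with
    | zero => intro _; simp
    | succ n ih =>
      intro hn
      have ihn := ih (Nat.le_of_succ_le hn)
      have hd := hdiff (n + 1) (Nat.le_add_left 1 n) hn
      simp only [Nat.add_sub_cancel] at hd
      have h1 : r * a (n + 1) ≤ a n + τ * g (n + 1) := by
        have h := (div_le_iff₀ hτ).mp hd
        rw [hr]; nlinarith [h]
      have hgb : g (n + 1) ≤ G := (abs_le.mp (hg (n + 1) (Nat.le_add_left 1 n) hn)).2
      have h2 : r * a (n + 1) ≤
          ((r ^ n)⁻¹ * a 0 + ((r ^ n)⁻¹ - 1) * G / lam) + τ * G := by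
        have := mul_le_mul_of_nonneg_left hgb hτ.le
        linarith
      have h3 : a (n + 1) ≤
          (((r ^ n)⁻¹ * a 0 + ((r ^ n)⁻¹ - 1) * G / lam) + τ * G) / r :=
        (le_div_iff₀' hone).mpr h2
      refine h3.trans (le_of_eq ?_)
      have hrn : r ^ n ≠ 0 := pow_ne_zero _ hr0
      rw [hr] at hr0 hrn ⊢
      field_simp
      ring
  exact fun m _ hM => key m hM
end

section
/- (Unique solvability of the matching condition in the non-even case) Let r > 0, ζ ∈ (−r, r), and p₁, p₂ ∈ (1, ∞) with Hölder conjugates p₁' = p₁/(p₁−1) and p₂' = p₂/(p₂−1). Then there exists exactly one a ∈ ℝ such that −(1/p₁')·|ζ − a|^{p₁'} + (1/p₁')·|r + a|^{p₁'} = −(1/p₂')·|ζ − a|^{p₂'} + (1/p₂')·|r − a|^{p₂'}. -/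
open Real Set

lemma strictConvexOn_abs_rpow {q : ℝ} (hq : 1 < q) :
    StrictConvexOn ℝ Set.univ (fun x : ℝ => |x| ^ q) := by
  have hq0 : 0 < q := by linarith
  refine ⟨convex_univ, ?_⟩
  intro x _ y _ hxy a b ha hb hab
  simp only [smul_eq_mul]
  rcases eq_or_ne |x| |y| with hxy' | hxy'
  · -- then y = -x, x ≠ 0
    have hyx : y = -x := by
      rcases abs_eq_abs.1 hxy' with h | h
      · exact absurd h hxy
      · rw [h]; ring
    subst hyx
    have hx0 : x ≠ 0 := by rintro rfl; simp at hxy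
    have hxpos : 0 < |x| := abs_pos.2 hx0
    have h1 : |a * x + b * -x| = |a - b| * |x| := by
      rw [← abs_mul]; ring_nf
    have h2 : |a - b| < 1 := by
      rw [abs_lt]; constructor <;> linarith
    have h3 : |a * x + b * -x| < |x| := by
      rw [h1]
      nlinarith
    have h4 : |a * x + b * -x| ^ q < |x| ^ q :=
      Real.rpow_lt_rpow (abs_nonneg _) h3 hq0
    have : a * |x| ^ q + b * |(-x)| ^ q = |x| ^ q := by
      rw [abs_neg]; linear_combination |x| ^ q * hab
    linarith
  · have h1 : |a * x + b * y| ^ q ≤ (a * |x| + b * |y|) ^ q := by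
      apply Real.rpow_le_rpow (abs_nonneg _) ?_ hq0.le
      calc |a * x + b * y| ≤ |a * x| + |b * y| := abs_add_le _ _
        _ = a * |x| + b * |y| := by
            rw [abs_mul, abs_mul, abs_of_pos ha, abs_of_pos hb]
    have h2 := (strictConvexOn_rpow hq).2 (mem_Ici.2 (abs_nonneg x))
      (mem_Ici.2 (abs_nonneg y)) hxy' ha hb hab
    simp only [smul_eq_mul] at h2
    linarith

lemma strictMono_abs_rpow_sub {q : ℝ} (hq : 1 < q) {u v : ℝ} (huv : u < v) :
    StrictMono (fun a : ℝ => |a - u| ^ q - |a - v| ^ q) := by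
  intro a b hab
  have hC := strictConvexOn_abs_rpow hq
  set d : ℝ := (b - u) - (a - v) with hd
  have hd0 : 0 < d := by rw [hd]; linarith
  set l : ℝ := (b - a) / d with hl
  have hld : l * d = b - a := div_mul_cancel₀ _ hd0.ne'
  have hl0 : 0 < l := div_pos (by linarith) hd0
  have hl1 : l < 1 := (div_lt_one hd0).2 (by rw [hd]; linarith)
  have hne : (a - v) ≠ (b - u) := by intro h; nlinarith
  have e1 : l * (a - v) + (1 - l) * (b - u) = a - u := by
    have : l * ((a - v) - (b - u)) = -(b - a) := by rw [← hld, hd]; ring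
    nlinarith
  have e2 : (1 - l) * (a - v) + l * (b - u) = b - v := by
    have : l * ((b - u) - (a - v)) = b - a := by rw [← hld, hd]
    nlinarith
  have h1 := hC.2 (mem_univ (a - v)) (mem_univ (b - u)) hne hl0
    (by linarith : (0:ℝ) < 1 - l) (by ring)
  have h2 := hC.2 (mem_univ (a - v)) (mem_univ (b - u)) hne
    (by linarith : (0:ℝ) < 1 - l) hl0 (by ring)
  simp only [smul_eq_mul] at h1 h2
  rw [e1] at h1
  rw [e2] at h2
  simp only []
  linarith

/-- **Unique solvability of the matching condition in the non-even case.** Let `r > 0`,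
`ζ ∈ (−r, r)`, and `p₁, p₂ ∈ (1, ∞)` with conjugates `p₁' = p₁/(p₁−1)`,
`p₂' = p₂/(p₂−1)`. Then there is exactly one `a ∈ ℝ` with
`−(1/p₁')·|ζ − a|^{p₁'} + (1/p₁')·|r + a|^{p₁'}
  = −(1/p₂')·|ζ − a|^{p₂'} + (1/p₂')·|r − a|^{p₂'}`. -/
theorem matching_condition_unique_solvability (r ζ p₁ p₂ : ℝ) (hr : 0 < r)
    (hζ : ζ ∈ Set.Ioo (-r) r) (hp₁ : 1 < p₁) (hp₂ : 1 < p₂) :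
    ∃! a : ℝ,
      -(1 / (p₁ / (p₁ - 1))) * |ζ - a| ^ (p₁ / (p₁ - 1))
          + 1 / (p₁ / (p₁ - 1)) * |r + a| ^ (p₁ / (p₁ - 1))
        = -(1 / (p₂ / (p₂ - 1))) * |ζ - a| ^ (p₂ / (p₂ - 1))
          + 1 / (p₂ / (p₂ - 1)) * |r - a| ^ (p₂ / (p₂ - 1)) := by
  obtain ⟨hζ1, hζ2⟩ := hζ
  set q₁ : ℝ := p₁ / (p₁ - 1) with hq₁def
  set q₂ : ℝ := p₂ / (p₂ - 1) with hq₂def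
  have hq₁ : 1 < q₁ := (one_lt_div (by linarith)).2 (by linarith)
  have hq₂ : 1 < q₂ := (one_lt_div (by linarith)).2 (by linarith)
  set F : ℝ → ℝ := fun a =>
    (1 / q₁) * (|a - (-r)| ^ q₁ - |a - ζ| ^ q₁)
      + (1 / q₂) * (|a - ζ| ^ q₂ - |a - r| ^ q₂) with hF
  have hFeq : ∀ a : ℝ,
      (-(1 / q₁) * |ζ - a| ^ q₁ + 1 / q₁ * |r + a| ^ q₁
        = -(1 / q₂) * |ζ - a| ^ q₂ + 1 / q₂ * |r - a| ^ q₂) ↔ F a = 0 := by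
    intro a
    have e1 : |ζ - a| = |a - ζ| := abs_sub_comm _ _
    have e2 : |r + a| = |a - (-r)| := by rw [sub_neg_eq_add, add_comm]
    have e3 : |r - a| = |a - r| := abs_sub_comm _ _
    rw [hF]
    simp only [e1, e2, e3]
    constructor
    · intro h; linarith
    · intro h; linarith
  have hmono : StrictMono F := by
    intro a b hab
    have h1 := strictMono_abs_rpow_sub hq₁ (show -r < ζ by linarith) hab
    have h2 := strictMono_abs_rpow_sub hq₂ (show ζ < r by linarith) hab
    simp only [] at h1 h2
    have c1 : 0 < 1 / q₁ := by positivity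
    have c2 : 0 < 1 / q₂ := by positivity
    rw [hF]
    simp only []
    nlinarith
  have hcont : Continuous F := by
    have habs : ∀ u : ℝ, ∀ q : ℝ, 0 ≤ q → Continuous fun a : ℝ => |a - u| ^ q :=
      fun u q hq => (continuous_id.sub continuous_const).abs.rpow_const fun x => Or.inr hq
    exact (continuous_const.mul ((habs (-r) q₁ (by linarith)).sub
        (habs ζ q₁ (by linarith)))).add
      (continuous_const.mul ((habs ζ q₂ (by linarith)).sub (habs r q₂ (by linarith))))
  have hFneg : F (-r) < 0 := by
    have e1 : |(-r) - (-r)| = 0 := by simp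
    have e2 : |(-r) - ζ| = ζ + r := by rw [abs_sub_comm, abs_of_pos (by linarith)]; ring
    have e3 : |(-r) - r| = 2 * r := by rw [abs_sub_comm, abs_of_pos (by linarith)]; ring
    rw [hF]
    simp only [e1, e2, e3]
    rw [Real.zero_rpow (by linarith : q₁ ≠ 0)]
    have h1 : 0 < (ζ + r) ^ q₁ := Real.rpow_pos_of_pos (by linarith) _
    have h2 : (ζ + r) ^ q₂ < (2 * r) ^ q₂ :=
      Real.rpow_lt_rpow (by linarith) (by linarith) (by linarith)
    have c1 : 0 < 1 / q₁ := by positivity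
    have c2 : 0 < 1 / q₂ := by positivity
    nlinarith
  have hFpos : 0 < F r := by
    have e1 : |r - (-r)| = 2 * r := by rw [abs_of_pos (by linarith)]; ring
    have e2 : |r - ζ| = r - ζ := abs_of_pos (by linarith)
    have e3 : |r - r| = 0 := by simp
    rw [hF]
    simp only [e1, e2, e3]
    rw [Real.zero_rpow (by linarith : q₂ ≠ 0)]
    have h1 : 0 < (r - ζ) ^ q₂ := Real.rpow_pos_of_pos (by linarith) _
    have h2 : (r - ζ) ^ q₁ < (2 * r) ^ q₁ :=
      Real.rpow_lt_rpow (by linarith) (by linarith) (by linarith)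
    have c1 : 0 < 1 / q₁ := by positivity
    have c2 : 0 < 1 / q₂ := by positivity
    nlinarith
  have hivt := intermediate_value_Icc (by linarith : (-r : ℝ) ≤ r) hcont.continuousOn
  obtain ⟨c, -, hc⟩ := hivt ⟨hFneg.le, hFpos.le⟩
  refine ⟨c, (hFeq c).2 hc, fun y hy => ?_⟩
  exact hmono.injective (by rw [(hFeq y).1 hy, hc])
end

section
/- (Explicit solution for a piecewise constant non-even exponent) Let r > 0, ζ ∈ (−r, r), and p₁, p₂ ∈ (1, ∞) with Hölder conjugates p₁' = p₁/(p₁−1) and p₂' = p₂/(p₂−1), and let a ∈ ℝ satisfy the matching condition −(1/p₁')·|ζ − a|^{p₁'} + (1/p₁')·|r + a|^{p₁'} = −(1/p₂')·|ζ − a|^{p₂'} + (1/p₂')·|r − a|^{p₂'}. Set b₁ := (1/p₁')·|r + a|^{p₁'} and b₂ := (1/p₂')·|r − a|^{p₂'}, and define v : [−r, r] → ℝ by v(x) := −(1/p₁')·|a − x|^{p₁'} + b₁ for x ∈ [−r, ζ] and v(x) := −(1/p₂')·|a − x|^{p₂'} + b₂ for x ∈ [ζ, r]. Then: (i) the two formulas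 agree at x = ζ, so v is well defined and continuous on [−r, r]; (ii) v(−r) = v(r) = 0; (iii) for every x ∈ (−r, ζ), v is differentiable at x with |v'(x)|^{p₁−2}·v'(x) = a − x, and for every x ∈ (ζ, r), v is differentiable at x with |v'(x)|^{p₂−2}·v'(x) = a − x. In particular, the flux x ↦ |v'(x)|^{p(x)−2}·v'(x) agrees away from x = ζ with the continuous function x ↦ a − x, whose derivative is −1, so v solves −(|v'|^{p(·)−2}v')' = 1 on (−r, r) away from ζ, with zero boundary values, for the exponent p(x) := p₁ for x < ζ and p(x) := p₂ for x > ζ. -/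
open Real Set

private lemma aux_hasDerivAt (q a b : ℝ) (hq : 1 < q) (x : ℝ) :
    HasDerivAt (fun x : ℝ => -(1 / q) * |a - x| ^ q + b)
      (|a - x| ^ (q - 2) * (a - x)) x := by
  have h0 : HasDerivAt (fun x : ℝ => a - x) (-1) x := (hasDerivAt_id x).const_sub a
  have h1 : HasDerivAt (fun x : ℝ => |a - x| ^ q)
      ((q * |a - x| ^ (q - 2) * (a - x)) * (-1)) x :=
    (hasDerivAt_abs_rpow (a - x) hq).comp x h0
  have h2 := (h1.const_mul (-(1 / q))).add_const b
  refine h2.congr_deriv ?_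
  have hq0 : q ≠ 0 := by linarith
  field_simp

private lemma aux_flux (p q d : ℝ) (hp : 1 < p) (hq : q = p / (p - 1)) :
    |(|d| ^ (q - 2) * d)| ^ (p - 2) * (|d| ^ (q - 2) * d) = d := by
  rcases eq_or_ne d 0 with rfl | hd
  · simp
  · have hd' : (0:ℝ) < |d| := abs_pos.mpr hd
    have habs : |(|d| ^ (q - 2) * d)| = |d| ^ (q - 1) := by
      rw [abs_mul, abs_of_nonneg (Real.rpow_nonneg (abs_nonneg d) _),
        ← Real.rpow_add_one hd'.ne']
      ring_nf
    rw [habs, ← Real.rpow_mul (abs_nonneg d)]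
    have h1 : |d| ^ ((q - 1) * (p - 2)) * (|d| ^ (q - 2) * d)
        = |d| ^ ((q - 1) * (p - 2) + (q - 2)) * d := by
      rw [Real.rpow_add hd']; ring
    rw [h1]
    have hp1 : p - 1 ≠ 0 := by linarith
    have : (q - 1) * (p - 2) + (q - 2) = 0 := by
      subst hq; field_simp; ring
    rw [this, Real.rpow_zero, one_mul]

/-- **Explicit solution for a piecewise constant non-even exponent.** Let `r > 0`,
`ζ ∈ (−r, r)`, `p₁, p₂ ∈ (1, ∞)` with conjugates `q₁ = p₁/(p₁−1)`, `q₂ = p₂/(p₂−1)`, let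
`a` satisfy the matching condition, set `b₁ := (1/q₁)·|r + a|^{q₁}`,
`b₂ := (1/q₂)·|r − a|^{q₂}`, and define `v(x) := −(1/q₁)·|a − x|^{q₁} + b₁` on `[−r, ζ]`,
`v(x) := −(1/q₂)·|a − x|^{q₂} + b₂` on `[ζ, r]`. Then: (i) the two formulas agree at
`x = ζ`, so `v` is well defined and continuous on `[−r, r]`; (ii) `v(−r) = v(r) = 0`;
(iii) on `(−r, ζ)` `v` is differentiable with `|v'(x)|^{p₁−2}·v'(x) = a − x`, and on
`(ζ, r)` `v` is differentiable with `|v'(x)|^{p₂−2}·v'(x) = a − x`. -/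
theorem explicit_solution_piecewise_constant_noneven_exponent
    (r ζ p₁ p₂ a : ℝ) (hr : 0 < r) (hζ : ζ ∈ Set.Ioo (-r) r)
    (hp₁ : 1 < p₁) (hp₂ : 1 < p₂)
    (q₁ q₂ : ℝ) (hq₁ : q₁ = p₁ / (p₁ - 1)) (hq₂ : q₂ = p₂ / (p₂ - 1))
    (ha : -(1 / q₁) * |ζ - a| ^ q₁ + 1 / q₁ * |r + a| ^ q₁
        = -(1 / q₂) * |ζ - a| ^ q₂ + 1 / q₂ * |r - a| ^ q₂)
    (b₁ b₂ : ℝ) (hb₁ : b₁ = 1 / q₁ * |r + a| ^ q₁) (hb₂ : b₂ = 1 / q₂ * |r - a| ^ q₂)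
    (v : ℝ → ℝ)
    (hv₁ : ∀ x ∈ Set.Icc (-r) ζ, v x = -(1 / q₁) * |a - x| ^ q₁ + b₁)
    (hv₂ : ∀ x ∈ Set.Icc ζ r, v x = -(1 / q₂) * |a - x| ^ q₂ + b₂) :
    -- (i) the two formulas agree at ζ; continuity
    ((-(1 / q₁) * |a - ζ| ^ q₁ + b₁ = -(1 / q₂) * |a - ζ| ^ q₂ + b₂) ∧
      ContinuousOn v (Set.Icc (-r) r)) ∧
    -- (ii) zero boundary values
    (v (-r) = 0 ∧ v r = 0) ∧
    -- (iii) differentiability and the flux identities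
    ((∀ x ∈ Set.Ioo (-r) ζ, DifferentiableAt ℝ v x ∧
        |deriv v x| ^ (p₁ - 2) * deriv v x = a - x) ∧
      (∀ x ∈ Set.Ioo ζ r, DifferentiableAt ℝ v x ∧
        |deriv v x| ^ (p₂ - 2) * deriv v x = a - x)) := by
  have hq₁' : 1 < q₁ := by
    rw [hq₁, lt_div_iff₀ (by linarith)]; linarith
  have hq₂' : 1 < q₂ := by
    rw [hq₂, lt_div_iff₀ (by linarith)]; linarith
  set f₁ : ℝ → ℝ := fun x => -(1 / q₁) * |a - x| ^ q₁ + b₁ with hf₁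
  set f₂ : ℝ → ℝ := fun x => -(1 / q₂) * |a - x| ^ q₂ + b₂ with hf₂
  have hder₁ : ∀ x : ℝ, HasDerivAt f₁ (|a - x| ^ (q₁ - 2) * (a - x)) x :=
    fun x => aux_hasDerivAt q₁ a b₁ hq₁' x
  have hder₂ : ∀ x : ℝ, HasDerivAt f₂ (|a - x| ^ (q₂ - 2) * (a - x)) x :=
    fun x => aux_hasDerivAt q₂ a b₂ hq₂' x
  have hcont₁ : Continuous f₁ :=
    continuous_iff_continuousAt.mpr fun x => (hder₁ x).continuousAt
  have hcont₂ : Continuous f₂ :=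
    continuous_iff_continuousAt.mpr fun x => (hder₂ x).continuousAt
  have hmatch : f₁ ζ = f₂ ζ := by
    simp only [hf₁, hf₂, hb₁, hb₂, abs_sub_comm a ζ]
    exact ha
  refine ⟨⟨hmatch, ?_⟩, ⟨?_, ?_⟩, ?_, ?_⟩
  · -- continuity
    have hF : Continuous (fun x => if x ≤ ζ then f₁ x else f₂ x) := by
      apply hcont₁.if_le hcont₂ continuous_id continuous_const
      intro x hx; simp only [id] at hx; rw [hx, hmatch]
    apply hF.continuousOn.congr
    intro x hx
    by_cases h : x ≤ ζ
    · simp only [hv₁ x ⟨hx.1, h⟩, if_pos h, hf₁]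
    · simp only [hv₂ x ⟨(not_le.mp h).le, hx.2⟩, if_neg h, hf₂]
  · rw [hv₁ (-r) ⟨le_refl _, by linarith [hζ.1]⟩, hb₁,
      show a - -r = r + a by ring]
    ring
  · rw [hv₂ r ⟨hζ.2.le, le_refl _⟩, hb₂, abs_sub_comm a r]
    ring
  · intro x hx
    have hev : v =ᶠ[nhds x] f₁ := by
      filter_upwards [Ioo_mem_nhds hx.1 hx.2] with y hy
      exact hv₁ y ⟨hy.1.le, hy.2.le⟩
    have hdv : HasDerivAt v (|a - x| ^ (q₁ - 2) * (a - x)) x :=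
      (hder₁ x).congr_of_eventuallyEq hev
    refine ⟨hdv.differentiableAt, ?_⟩
    rw [hdv.deriv]
    exact aux_flux p₁ q₁ (a - x) hp₁ hq₁
  · intro x hx
    have hev : v =ᶠ[nhds x] f₂ := by
      filter_upwards [Ioo_mem_nhds hx.1 hx.2] with y hy
      exact hv₂ y ⟨hy.1.le, hy.2.le⟩
    have hdv : HasDerivAt v (|a - x| ^ (q₂ - 2) * (a - x)) x :=
      (hder₂ x).congr_of_eventuallyEq hev
    refine ⟨hdv.differentiableAt, ?_⟩
    rw [hdv.deriv]
    exact aux_flux p₂ q₂ (a - x) hp₂ hq₂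
end
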